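/- arXiv:1312.6005 — 2 statements merged into one kernel-verified Lean document; each statement's English description precedes it below -/
import Mathlib

section
/- Let K and L be convex bodies in ℝ^n with vol(K ∩ (−L)) = M(K,L) = max_z vol(K ∩ (z − L)), and suppose the limit C(K,L) = lim_{θ→1⁻} (K +_θ L)/(1 − θ^{1/n}) exists as a convex body (equivalently, the increasing family (K +_θ L)/(1 − θ^{1/n}) has union with closure C(K,L)). Then vol(C(K,L)) ≥ binom(2n, n) · vol(K)·vol(L)/M(K,L). -/
open MeasureTheory Pointwise ENNReal

section aux

lemma prod_range_add_nat (n k : ℕ) : ∏ j ∈ Finset.range k, (n + j) = n.ascFactorial k := by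
  induction k with
  | zero => simp
  | succ k ih => rw [Finset.prod_range_succ, ih, Nat.ascFactorial_succ, mul_comm]

lemma prod_fact (n : ℕ) (hn : 0 < n) :
    (n - 1).factorial * ∏ j ∈ Finset.range (n + 1), (n + j) = (2 * n).factorial := by
  rw [prod_range_add_nat]
  have h1 : n - 1 + 1 = n := Nat.succ_pred_eq_of_pos hn
  have := Nat.factorial_mul_ascFactorial (n - 1) (n + 1)
  rw [h1] at this
  rw [this]
  congr 1
  omega

lemma integralA {n : ℕ} (hn : 0 < n) :
    ∫ x in (0:ℝ)..1, x ^ (n - 1) * (1 - x) ^ n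
      = ((n - 1).factorial * n.factorial : ℝ) / (2 * n).factorial := by
  have hre : 0 < ((n : ℂ)).re := by simpa using hn
  have hbeta := Complex.betaIntegral_eval_nat_add_one_right hre n
  have hI : Complex.betaIntegral (n : ℂ) ((n : ℂ) + 1)
      = ((∫ x in (0:ℝ)..1, x ^ (n - 1) * (1 - x) ^ n : ℝ) : ℂ) := by
    rw [Complex.betaIntegral]
    rw [← intervalIntegral.integral_ofReal]
    apply intervalIntegral.integral_congr
    intro x hx
    have h1 : (n : ℂ) - 1 = ((n - 1 : ℕ) : ℂ) := by
      push_cast [Nat.cast_sub hn]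
      ring
    have h2 : (n : ℂ) + 1 - 1 = ((n : ℕ) : ℂ) := by ring
    rw [h1, h2]
    simp only [Complex.cpow_natCast]
    push_cast
    ring
  rw [hI] at hbeta
  have hP : ((n - 1).factorial : ℂ) * ∏ j ∈ Finset.range (n + 1), ((n : ℂ) + (j : ℂ))
      = ((2 * n).factorial : ℂ) := by
    have := prod_fact n hn
    push_cast [← this]
    norm_num
  have hPne : (∏ j ∈ Finset.range (n + 1), ((n : ℂ) + (j : ℂ))) ≠ 0 := by
    intro h
    rw [h, mul_zero] at hP
    exact (Nat.cast_ne_zero.mpr (Nat.factorial_ne_zero _)) hP.symm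
  have key : ((∫ x in (0:ℝ)..1, x ^ (n - 1) * (1 - x) ^ n : ℝ) : ℂ) * ((2 * n).factorial : ℂ)
      = ((n - 1).factorial : ℂ) * (n.factorial : ℂ) := by
    rw [hbeta, ← hP]
    field_simp
  have keyR : (∫ x in (0:ℝ)..1, x ^ (n - 1) * (1 - x) ^ n) * ((2 * n).factorial : ℝ)
      = ((n - 1).factorial : ℝ) * (n.factorial : ℝ) := by
    exact_mod_cast key
  have hne : ((2 * n).factorial : ℝ) ≠ 0 := Nat.cast_ne_zero.mpr (Nat.factorial_ne_zero _)
  field_simp at keyR ⊢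
  linarith [keyR]

lemma integralB {n : ℕ} (hn : 0 < n) :
    ∫ θ in (0:ℝ)..1, (1 - θ ^ ((n:ℝ)⁻¹)) ^ n = 1 / ((2 * n).choose n : ℝ) := by
  have hgcont : Continuous fun θ : ℝ => (1 - θ ^ ((n:ℝ)⁻¹)) ^ n := by
    apply Continuous.pow
    apply Continuous.sub continuous_const
    rw [continuous_iff_continuousAt]
    intro x
    exact Real.continuousAt_rpow_const x _ (Or.inr (by positivity))
  have hderiv : ∀ x ∈ Set.uIcc (0:ℝ) 1,
      HasDerivAt (fun s : ℝ => s ^ n) ((n : ℝ) * x ^ (n - 1)) x := fun x _ => hasDerivAt_pow n x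
  have hcomp := intervalIntegral.integral_comp_smul_deriv hderiv
    (by continuity : Continuous fun s : ℝ => (n : ℝ) * s ^ (n - 1)).continuousOn hgcont
  simp only [one_pow, zero_pow hn.ne', smul_eq_mul, Function.comp] at hcomp
  rw [← hcomp]
  have hcong : ∫ s in (0:ℝ)..1, (n : ℝ) * s ^ (n - 1) * (1 - (s ^ n) ^ ((n:ℝ)⁻¹)) ^ n
      = ∫ s in (0:ℝ)..1, (n : ℝ) * (s ^ (n - 1) * (1 - s) ^ n) := by
    apply intervalIntegral.integral_congr
    intro s hs
    rw [Set.uIcc_of_le (by norm_num : (0:ℝ) ≤ 1)] at hs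
    have hs0 : 0 ≤ s := hs.1
    have : (s ^ n : ℝ) ^ ((n:ℝ)⁻¹) = s := by
      rw [← Real.rpow_natCast s n, ← Real.rpow_mul hs0,
        mul_inv_cancel₀ (Nat.cast_ne_zero.mpr hn.ne' : (n:ℝ) ≠ 0), Real.rpow_one]
    simp only [this]; ring
  rw [hcong, intervalIntegral.integral_const_mul, integralA hn]
  have hchoose : ((2 * n).choose n : ℝ) * (n.factorial : ℝ) * (n.factorial : ℝ)
      = ((2 * n).factorial : ℝ) := by
    have := Nat.choose_mul_factorial_mul_factorial
      (Nat.le_mul_of_pos_left n (by norm_num) : n ≤ 2 * n)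
    have h2 : 2 * n - n = n := by omega
    rw [h2] at this
    exact_mod_cast this
  have hmf : (n : ℝ) * ((n-1).factorial : ℝ) = (n.factorial : ℝ) := by
    exact_mod_cast Nat.mul_factorial_pred hn.ne'
  have h1 : ((2*n).factorial : ℝ) ≠ 0 := Nat.cast_ne_zero.mpr (Nat.factorial_ne_zero _)
  have h2 : ((2*n).choose n : ℝ) ≠ 0 :=
    Nat.cast_ne_zero.mpr (Nat.choose_pos (show n ≤ 2*n by omega)).ne'
  calc (n:ℝ) * (((n-1).factorial : ℝ) * (n.factorial:ℝ) / ((2*n).factorial:ℝ))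
      = ((n.factorial:ℝ) * (n.factorial:ℝ)) / ((2*n).factorial:ℝ) := by rw [← hmf]; ring
    _ = 1 / ((2 * n).choose n : ℝ) := by
        rw [div_eq_div_iff h1 h2]
        linarith [hchoose]

end aux

/-- The `θ`-convolution body of `K` and `L`, normalized so that the maximum of
`z ↦ vol(K ∩ (z − L))` is `vol(K ∩ (−L))`. -/
noncomputable def thetaConv {n : ℕ} (K L : Set (EuclideanSpace ℝ (Fin n))) (θ : ℝ) :
    Set (EuclideanSpace ℝ (Fin n)) :=
  {x ∈ K + L |
    ENNReal.ofReal θ * volume (K ∩ -L) ≤ volume (K ∩ ((fun y => x - y) '' L))}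

theorem volume_limiting_convolution_body {n : ℕ} (hn : 0 < n)
    (K L : Set (EuclideanSpace ℝ (Fin n)))
    (hK : Convex ℝ K) (hKc : IsCompact K) (hKi : (interior K).Nonempty)
    (hL : Convex ℝ L) (hLc : IsCompact L) (hLi : (interior L).Nonempty)
    (hM : ∀ z : EuclideanSpace ℝ (Fin n),
      volume (K ∩ ((fun y => z - y) '' L)) ≤ volume (K ∩ -L))
    (C : Set (EuclideanSpace ℝ (Fin n)))
    (hC : C = closure (⋃ θ ∈ Set.Ico (0:ℝ) 1,
      (1 - θ ^ ((n:ℝ)⁻¹))⁻¹ • thetaConv K L θ)) :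
    ((2 * n).choose n : ℝ≥0∞) * (volume K * volume L) / volume (K ∩ -L) ≤
      volume C := by
  classical
  have hKm : MeasurableSet K := hKc.measurableSet
  have hLm : MeasurableSet L := hLc.measurableSet
  set g : EuclideanSpace ℝ (Fin n) → ℝ≥0∞ := fun x => volume (K ∩ ((fun y => x - y) '' L)) with hgdef
  set M : ℝ≥0∞ := volume (K ∩ -L) with hMdef
  have hMtop : M ≠ ⊤ :=
    ((measure_mono Set.inter_subset_left).trans_lt hKc.measure_lt_top).ne
  have hpre : ∀ x : EuclideanSpace ℝ (Fin n), (fun y => x - y) '' L = (fun y => x - y) ⁻¹' L := by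
    intro x; ext y; constructor
    · rintro ⟨l, hl, rfl⟩; simpa [sub_sub_cancel] using hl
    · intro hy; exact ⟨x - y, hy, by simp⟩
  -- M is positive
  obtain ⟨a, ha⟩ := hKi
  obtain ⟨b, hb⟩ := hLi
  have hMpos : 0 < M := by
    have h1 : 0 < g (a + b) := by
      have hopen : IsOpen (interior K ∩ (fun y => (a+b) - y) ⁻¹' interior L) :=
        isOpen_interior.inter (isOpen_interior.preimage (by continuity))
      refine lt_of_lt_of_le (hopen.measure_pos volume ⟨a, ha, ?_⟩) (measure_mono ?_)
      · show (a + b) - a ∈ interior L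
        simpa using hb
      · rw [hpre]
        exact Set.inter_subset_inter interior_subset (Set.preimage_mono interior_subset)
    exact h1.trans_le (hM _)
  -- representation of g as an integral
  have hgrep : ∀ x, g x = ∫⁻ y, K.indicator 1 y * L.indicator 1 (x - y) := by
    intro x
    have hms : MeasurableSet (K ∩ (fun y => x - y) ⁻¹' L) :=
      hKm.inter (hLm.preimage (measurable_const.sub measurable_id))
    rw [hgdef]
    simp only [hpre]
    rw [← lintegral_indicator_one hms]
    apply lintegral_congr
    intro y
    by_cases h1 : y ∈ K <;> by_cases h2 : x - y ∈ L <;>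
      simp [Set.indicator_apply, h1, h2]
  have hFmeas : Measurable
      (fun p : EuclideanSpace ℝ (Fin n) × EuclideanSpace ℝ (Fin n) => K.indicator (1:EuclideanSpace ℝ (Fin n)→ℝ≥0∞) p.2 * L.indicator 1 (p.1 - p.2)) := by
    apply Measurable.mul
    · exact (measurable_one.indicator hKm).comp measurable_snd
    · exact (measurable_one.indicator hLm).comp (measurable_fst.sub measurable_snd)
  have hgmeas : Measurable g := by
    have := Measurable.lintegral_prod_right (ν := volume)
      (f := fun (x : EuclideanSpace ℝ (Fin n)) (y : EuclideanSpace ℝ (Fin n)) => K.indicator (1:EuclideanSpace ℝ (Fin n)→ℝ≥0∞) y * L.indicator 1 (x - y)) hFmeas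
    simpa [← hgrep] using this
  -- Fubini
  have hfub : ∫⁻ x, g x = volume K * volume L := by
    rw [lintegral_congr hgrep, lintegral_lintegral_swap hFmeas.aemeasurable]
    have hinner : ∀ y : EuclideanSpace ℝ (Fin n), (∫⁻ x, K.indicator (1:EuclideanSpace ℝ (Fin n)→ℝ≥0∞) y * L.indicator 1 (x - y))
        = K.indicator (1:EuclideanSpace ℝ (Fin n)→ℝ≥0∞) y * volume L := by
      intro y
      rw [lintegral_const_mul' _ _ (by by_cases hy : y ∈ K <;> simp [Set.indicator_apply, hy])]
      congr 1
      have h1 : ∫⁻ x : EuclideanSpace ℝ (Fin n), L.indicator (1:EuclideanSpace ℝ (Fin n)→ℝ≥0∞) (x - y) = ∫⁻ x : EuclideanSpace ℝ (Fin n), L.indicator 1 x := by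
        simpa [sub_eq_add_neg] using
          lintegral_add_right_eq_self (μ := volume) (fun x : EuclideanSpace ℝ (Fin n) => L.indicator (1:EuclideanSpace ℝ (Fin n)→ℝ≥0∞) x) (-y)
      rw [h1, lintegral_indicator_one hLm]
    simp only [hinner]
    rw [lintegral_mul_const _ (measurable_one.indicator hKm), lintegral_indicator_one hKm,
      mul_comm]
  -- g is bounded by M
  have hgM : ∀ x, g x ≤ M := hM
  have hgtop : ∀ x, g x ≠ ⊤ := fun x => ((hgM x).trans_lt hMtop.lt_top).ne
  -- layer cake
  have hlc := lintegral_eq_lintegral_meas_le volume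
    (f := fun x => (g x).toReal)
    (Filter.Eventually.of_forall fun x => ENNReal.toReal_nonneg)
    hgmeas.ennreal_toReal.aemeasurable
  set F : ℝ → ℝ≥0∞ := fun t => volume {x : EuclideanSpace ℝ (Fin n) | ENNReal.ofReal t ≤ g x} with hFdef
  have hKL : volume K * volume L = ∫⁻ t in Set.Ioi (0:ℝ), F t := by
    rw [← hfub]
    have hl : ∫⁻ x, ENNReal.ofReal ((g x).toReal) = ∫⁻ x, g x :=
      lintegral_congr fun x => ofReal_toReal (hgtop x)
    rw [← hl, hlc]
    apply lintegral_congr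
    intro t
    congr 1
    ext x
    exact (ENNReal.ofReal_le_iff_le_toReal (hgtop x)).symm
  set Mr : ℝ := M.toReal with hMrdef
  have hMrpos : 0 < Mr := ENNReal.toReal_pos hMpos.ne' hMtop
  have hMor : M = ENNReal.ofReal Mr := (ofReal_toReal hMtop).symm
  -- F vanishes beyond Mr
  have hFzero : ∀ t, Mr < t → F t = 0 := by
    intro t ht
    have : {x : EuclideanSpace ℝ (Fin n) | ENNReal.ofReal t ≤ g x} = ∅ := by
      ext x
      simp only [Set.mem_setOf_eq, Set.mem_empty_iff_false, iff_false, not_le]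
      calc g x ≤ M := hgM x
        _ = ENNReal.ofReal Mr := hMor
        _ < ENNReal.ofReal t := by
            exact (ENNReal.ofReal_lt_ofReal_iff (hMrpos.trans ht)).mpr ht
    rw [hFdef]
    simp [this]
  -- main pointwise bound
  have hbound : ∀ t ∈ Set.Ioo (0:ℝ) Mr,
      F t ≤ ENNReal.ofReal ((1 - (t / Mr) ^ ((n:ℝ)⁻¹)) ^ n) * volume C := by
    intro t ht
    set θ : ℝ := t / Mr with hθdef
    have hθ0 : 0 < θ := div_pos ht.1 hMrpos
    have hθ1 : θ < 1 := (div_lt_one hMrpos).mpr ht.2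
    have hofr : ENNReal.ofReal t = ENNReal.ofReal θ * M := by
      rw [hMor, ← ENNReal.ofReal_mul hθ0.le, hθdef, div_mul_cancel₀ _ hMrpos.ne']
    have hsub1 : {x : EuclideanSpace ℝ (Fin n) | ENNReal.ofReal t ≤ g x} ⊆ thetaConv K L θ := by
      intro x hx
      have hxg : ENNReal.ofReal θ * M ≤ g x := by
        rw [← hofr]; exact hx
      have hgpos : g x ≠ 0 := by
        have h0 : (0:ℝ≥0∞) < ENNReal.ofReal θ * M :=
          ENNReal.mul_pos (ENNReal.ofReal_pos.mpr hθ0).ne' hMpos.ne'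
        exact (h0.trans_le hxg).ne'
      obtain ⟨y, hyK, hyL⟩ := nonempty_of_measure_ne_zero hgpos
      obtain ⟨l, hl, hyl⟩ := hyL
      refine ⟨?_, hxg⟩
      have hx' : x = y + l := by rw [← hyl]; simp
      exact hx' ▸ Set.add_mem_add hyK hl
    set c : ℝ := 1 - θ ^ ((n:ℝ)⁻¹) with hcdef
    have hc0 : 0 < c := sub_pos.mpr (Real.rpow_lt_one hθ0.le hθ1 (by positivity))
    have hCC : c⁻¹ • thetaConv K L θ ⊆ C := by
      rw [hC]
      refine subset_trans ?_ subset_closure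
      exact Set.subset_biUnion_of_mem
        (u := fun θ : ℝ => (1 - θ ^ ((n:ℝ)⁻¹))⁻¹ • thetaConv K L θ)
        (show θ ∈ Set.Ico (0:ℝ) 1 from ⟨hθ0.le, hθ1⟩)
    have hsub2 : thetaConv K L θ ⊆ c • C := by
      have h2 := Set.smul_set_mono (a := c) hCC
      rwa [smul_inv_smul₀ hc0.ne'] at h2
    calc F t ≤ volume (c • C) := measure_mono (hsub1.trans hsub2)
      _ = ENNReal.ofReal (c ^ n) * volume C := by
          rw [Measure.addHaar_smul, finrank_euclideanSpace_fin,
            abs_of_nonneg (pow_nonneg hc0.le n)]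
  -- the bounding function
  set H : ℝ → ℝ := fun t => (1 - (t / Mr) ^ ((n:ℝ)⁻¹)) ^ n with hHdef
  have hHcont : Continuous H := by
    have hr : Continuous fun t : ℝ => (t / Mr) ^ ((n:ℝ)⁻¹) :=
      (continuous_id.div_const Mr).rpow_const (fun x => Or.inr (by positivity))
    exact (continuous_const.sub hr).pow n
  -- integrate
  have hsplit : Set.Ioi (0:ℝ) = Set.Ioo 0 Mr ∪ Set.Ici Mr :=
    (Set.Ioo_union_Ici_eq_Ioi hMrpos).symm
  have hzero : ∫⁻ t in Set.Ici Mr, F t = 0 := by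
    have hae : ∀ᵐ t ∂(volume.restrict (Set.Ici Mr)), F t = 0 := by
      have h2 : ∀ᵐ t : ℝ ∂volume, t ≠ Mr := by
        rw [ae_iff]
        simpa using (Real.volume_singleton (a := Mr))
      filter_upwards [ae_restrict_mem measurableSet_Ici, ae_restrict_of_ae h2] with t ht hne
      exact hFzero t (lt_of_le_of_ne ht (Ne.symm hne))
    rw [lintegral_congr_ae hae]
    simp
  have hHmeas : Measurable fun t => ENNReal.ofReal (H t) * volume C :=
    (ENNReal.measurable_ofReal.comp hHcont.measurable).mul_const _
  have hchain : volume K * volume L ≤ (∫⁻ t in Set.Ioo 0 Mr, ENNReal.ofReal (H t)) * volume C := by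
    calc volume K * volume L = ∫⁻ t in Set.Ioi (0:ℝ), F t := hKL
      _ = (∫⁻ t in Set.Ioo 0 Mr, F t) + ∫⁻ t in Set.Ici Mr, F t := by
          rw [hsplit, lintegral_union measurableSet_Ici
            (by rw [Set.disjoint_iff]; rintro x ⟨⟨_, h1⟩, h2⟩; exact absurd h2 (not_le.mpr h1))]
      _ = ∫⁻ t in Set.Ioo 0 Mr, F t := by rw [hzero, add_zero]
      _ ≤ ∫⁻ t in Set.Ioo 0 Mr, ENNReal.ofReal (H t) * volume C :=
          setLIntegral_mono hHmeas hbound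
      _ = (∫⁻ t in Set.Ioo 0 Mr, ENNReal.ofReal (H t)) * volume C :=
          lintegral_mul_const _ (ENNReal.measurable_ofReal.comp hHcont.measurable)
  -- compute the integral of H
  have hHint : ∫⁻ t in Set.Ioo 0 Mr, ENNReal.ofReal (H t)
      = ENNReal.ofReal (Mr / ((2 * n).choose n : ℝ)) := by
    have hint : IntegrableOn H (Set.Ioo 0 Mr) volume :=
      (hHcont.integrableOn_Icc (a := 0) (b := Mr)).mono_set Set.Ioo_subset_Icc_self
    have hposae : 0 ≤ᵐ[volume.restrict (Set.Ioo 0 Mr)] H := by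
      filter_upwards [ae_restrict_mem measurableSet_Ioo] with t ht
      have h1 : (t / Mr) ^ ((n:ℝ)⁻¹) ≤ 1 :=
        Real.rpow_le_one (div_nonneg ht.1.le hMrpos.le) ((div_le_one hMrpos).mpr ht.2.le) (by positivity)
      exact pow_nonneg (by linarith) n
    rw [← ofReal_integral_eq_lintegral_ofReal hint hposae]
    congr 1
    have h1 : ∫ t in Set.Ioo 0 Mr, H t = ∫ t in (0:ℝ)..Mr, H t := by
      rw [intervalIntegral.integral_of_le hMrpos.le, integral_Ioc_eq_integral_Ioo]
    rw [h1]
    have h2 : ∫ t in (0:ℝ)..Mr, H t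
        = Mr • ∫ θ in (0:ℝ)/Mr..Mr/Mr, (1 - θ ^ ((n:ℝ)⁻¹)) ^ n := by
      exact intervalIntegral.integral_comp_div (f := fun θ => (1 - θ ^ ((n:ℝ)⁻¹)) ^ n)
        hMrpos.ne'
    rw [h2, zero_div, div_self hMrpos.ne', integralB hn]
    simp [smul_eq_mul, div_eq_mul_inv, one_div]
  -- conclude
  rw [hHint] at hchain
  have hb0 : ((2 * n).choose n : ℝ≥0∞) ≠ 0 := by
    exact_mod_cast (Nat.choose_pos (show n ≤ 2*n by omega)).ne'
  have hbtop : ((2 * n).choose n : ℝ≥0∞) ≠ ⊤ := natCast_ne_top _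
  have hdiv : ENNReal.ofReal (Mr / ((2 * n).choose n : ℝ))
      = M / ((2 * n).choose n : ℝ≥0∞) := by
    rw [ENNReal.ofReal_div_of_pos (by exact_mod_cast Nat.choose_pos (show n ≤ 2*n by omega)),
      ← hMor, ENNReal.ofReal_natCast]
  rw [hdiv] at hchain
  rw [ENNReal.div_le_iff hMpos.ne' hMtop]
  calc ((2 * n).choose n : ℝ≥0∞) * (volume K * volume L)
      ≤ ((2 * n).choose n : ℝ≥0∞) * (M / ((2 * n).choose n : ℝ≥0∞) * volume C) := by
        exact mul_le_mul_right hchain _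
    _ = M * volume C := by
        rw [← mul_assoc, mul_comm _ (M / _), ENNReal.div_mul_cancel hb0 hbtop]
    _ = volume C * M := mul_comm _ _
end

section
/- Let K be a convex body in ℝ^n and E a k-dimensional linear subspace. Then vol_k((K − K) ∩ E) ≤ binom(n + k, k) · max_{x ∈ ℝ^n} vol_k(K ∩ (x + E)). -/
open MeasureTheory intervalIntegral Pointwise ENNReal
set_option maxHeartbeats 1000000

lemma beta_nat (a b : ℕ) : ∫ x in (0:ℝ)..1, x ^ a * (1 - x) ^ b
    = (a.factorial * b.factorial : ℝ) / (a + b + 1).factorial := by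
  induction b generalizing a with
  | zero =>
    simp only [pow_zero, mul_one, integral_pow, one_pow, Nat.factorial]
    rw [zero_pow (Nat.succ_ne_zero a)]
    push_cast
    have h4 : ((a.factorial : ℝ)) ≠ 0 := Nat.cast_ne_zero.2 (Nat.factorial_ne_zero _)
    field_simp
    norm_num
  | succ b ih =>
    have key : ∀ x ∈ Set.uIcc (0:ℝ) 1, HasDerivAt
        (fun x : ℝ => x ^ (a+1) * (1 - x) ^ (b+1) / (a+1))
        (x ^ a * (1-x)^(b+1) - ((b+1:ℝ)/(a+1)) * (x ^ (a+1) * (1-x)^b)) x := by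
      intro x _
      have h1 : HasDerivAt (fun x : ℝ => x ^ (a+1)) ((a+1) * x ^ a) x := by
        simpa using (hasDerivAt_pow (a+1) x)
      have h2 : HasDerivAt (fun x : ℝ => (1 - x) ^ (b+1)) (-((b+1) * (1-x) ^ b)) x := by
        have := ((hasDerivAt_pow (b+1) (1 - x)).comp x ((hasDerivAt_id x).const_sub 1))
        simpa [mul_comm, Function.comp_def] using this
      have := (h1.mul h2).div_const (a+1)
      refine this.congr_deriv ?_
      have ha : (a:ℝ) + 1 ≠ 0 := by positivity
      field_simp
      ring
    have hint : (∫ x in (0:ℝ)..1, (x ^ a * (1-x)^(b+1) - ((b+1:ℝ)/(a+1)) * (x ^ (a+1) * (1-x)^b)))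
        = 0 := by
      rw [integral_eq_sub_of_hasDerivAt key ((Continuous.intervalIntegrable (by continuity) 0 1))]
      simp
    have hsub : (∫ x in (0:ℝ)..1, (x ^ a * (1-x)^(b+1) - ((b+1:ℝ)/(a+1)) * (x ^ (a+1) * (1-x)^b)))
        = (∫ x in (0:ℝ)..1, x ^ a * (1-x)^(b+1)) - ((b+1:ℝ)/(a+1)) * ∫ x in (0:ℝ)..1, x ^ (a+1) * (1-x)^b := by
      rw [intervalIntegral.integral_sub (Continuous.intervalIntegrable (by continuity) 0 1)
        (Continuous.intervalIntegrable (by continuity) 0 1), intervalIntegral.integral_const_mul]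
    have := hint
    rw [hsub, sub_eq_zero] at this
    rw [this, ih (a+1)]
    have e1 : a + 1 + b + 1 = (a+b+1) + 1 := by omega
    have e2 : a + (b + 1) + 1 = (a+b+1) + 1 := by omega
    rw [e1, e2, Nat.factorial_succ (a+b+1), Nat.factorial_succ b, Nat.factorial_succ a]
    have h3 : (((a+b+1).factorial : ℝ)) ≠ 0 := Nat.cast_ne_zero.2 (Nat.factorial_ne_zero _)
    have h4 : ((a.factorial : ℝ)) ≠ 0 := Nat.cast_ne_zero.2 (Nat.factorial_ne_zero _)
    push_cast
    field_simp

theorem sections_of_difference_body_bound {n k : ℕ}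
    (K : Set (EuclideanSpace ℝ (Fin n)))
    (hK : Convex ℝ K) (hKc : IsCompact K) (hKi : (interior K).Nonempty)
    (E : Submodule ℝ (EuclideanSpace ℝ (Fin n))) (hE : Module.finrank ℝ E = k) :
    volume (((↑) : E → EuclideanSpace ℝ (Fin n)) ⁻¹' (K - K)) ≤
      ((n + k).choose k : ℝ≥0∞) *
        ⨆ x : EuclideanSpace ℝ (Fin n),
          volume ((fun e : E => x + (e : EuclideanSpace ℝ (Fin n))) ⁻¹' K) := by
  classical
  obtain ⟨x₀, hx₀i⟩ := hKi
  have hx₀ : x₀ ∈ K := interior_subset hx₀i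
  rcases Nat.eq_zero_or_pos n with hn | hn
  · -- degenerate case n = 0
    subst hn
    have h1 : (((↑) : E → EuclideanSpace ℝ (Fin 0)) ⁻¹' (K - K)) ⊆
        (fun e : E => x₀ + (e : EuclideanSpace ℝ (Fin 0))) ⁻¹' K := by
      intro e _
      have he : (e : EuclideanSpace ℝ (Fin 0)) = 0 := Subsingleton.elim _ _
      simp [Set.mem_preimage, he, hx₀]
    calc volume (((↑) : E → EuclideanSpace ℝ (Fin 0)) ⁻¹' (K - K))
        ≤ volume ((fun e : E => x₀ + (e : EuclideanSpace ℝ (Fin 0))) ⁻¹' K) :=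
          measure_mono h1
      _ ≤ ⨆ x : EuclideanSpace ℝ (Fin 0),
            volume ((fun e : E => x + (e : EuclideanSpace ℝ (Fin 0))) ⁻¹' K) :=
          le_iSup (fun x => volume ((fun e : E => x + (e : EuclideanSpace ℝ (Fin 0))) ⁻¹' K)) x₀
      _ ≤ _ := le_mul_of_one_le_left zero_le (by
          simp [Nat.choose_self])
  -- main case n ≥ 1
  have hKm : MeasurableSet K := hKc.measurableSet
  have hμK0 : volume K ≠ 0 := (MeasureTheory.Measure.measure_pos_of_nonempty_interior volume ⟨x₀, hx₀i⟩).ne'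
  have hμKtop : volume K ≠ ⊤ := hKc.measure_lt_top.ne
  set C : Set E := (((↑) : E → EuclideanSpace ℝ (Fin n)) ⁻¹' (K - K)) with hCdef
  set M := ⨆ x : EuclideanSpace ℝ (Fin n), volume ((fun e : E => x + (e : EuclideanSpace ℝ (Fin n))) ⁻¹' K) with hMdef
  set g : E → ℝ≥0∞ := fun v => volume {x : EuclideanSpace ℝ (Fin n) | x ∈ K ∧ x - (v : EuclideanSpace ℝ (Fin n)) ∈ K} with hgdef
  have hCcl : IsClosed C := ((by rw [sub_eq_add_neg]; exact hKc.add hKc.neg : IsCompact (K - K)).isClosed).preimage continuous_subtype_val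
  have hCm : MeasurableSet C := hCcl.measurableSet
  -- Claim A
  have claimA : ∀ t : ℝ, 0 ≤ t → t ≤ 1 → ∀ v : E, v ∈ t • C →
      ENNReal.ofReal ((1-t)^n) * volume K ≤ g v := by
    simp only [hgdef]
    intro t ht0 ht1 v hv
    obtain ⟨w, hwC, rfl⟩ := hv
    rw [hCdef] at hwC
    obtain ⟨p, hp, q, hq, hpq⟩ := Set.mem_sub.1 hwC
    have hvco : ((t • w : E) : EuclideanSpace ℝ (Fin n)) = t • (p - q) := by
      rw [Submodule.coe_smul, hpq]
    have hT1 : (fun y => t • p + (1-t) • y) '' K ⊆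
        {x : EuclideanSpace ℝ (Fin n) | x ∈ K ∧ x - ((t • w : E) : EuclideanSpace ℝ (Fin n)) ∈ K} := by
      rintro _ ⟨y, hy, rfl⟩
      refine ⟨hK hp hy ht0 (by linarith) (by ring), ?_⟩
      rw [hvco]
      have : t • p + (1 - t) • y - t • (p - q) = t • q + (1-t) • y := by
        rw [smul_sub]; abel
      rw [this]
      exact hK hq hy ht0 (by linarith) (by ring)
    have hTeq : (fun y => t • p + (1-t) • y) '' K = (t • p) +ᵥ ((1-t) • K) := by
      rw [← Set.image_smul, ← Set.image_vadd, Set.image_image]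
      rfl
    have hTvol : volume ((fun y => t • p + (1-t) • y) '' K) = ENNReal.ofReal ((1-t)^n) * volume K := by
      rw [hTeq, measure_vadd, Measure.addHaar_smul_of_nonneg volume (by linarith) K,
        finrank_euclideanSpace_fin]
    rw [← hTvol]
    exact measure_mono hT1
  -- Claim B
  have claimB : ∀ v : E, volume K *
      ∫⁻ t in Set.Ioo (0:ℝ) 1,
        ENNReal.ofReal (n * (1-t)^(n-1)) * C.indicator 1 (t⁻¹ • v) ≤ g v := by
    intro v
    set S : Set ℝ := {t : ℝ | t ∈ Set.Ioo (0:ℝ) 1 ∧ t⁻¹ • v ∈ C} with hSdef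
    have hmemS : ∀ t ∈ S, v ∈ t • C := by
      intro t ht
      exact (Set.mem_smul_set_iff_inv_smul_mem₀ (ne_of_gt ht.1.1) C v).2 ht.2
    rcases S.eq_empty_or_nonempty with hS | hS
    · have hzero : ∫⁻ t in Set.Ioo (0:ℝ) 1,
          ENNReal.ofReal (n * (1-t)^(n-1)) * C.indicator 1 (t⁻¹ • v) = 0 := by
        rw [← le_zero_iff]
        calc _ ≤ ∫⁻ t in Set.Ioo (0:ℝ) 1, 0 ∂volume := by
              refine setLIntegral_mono' measurableSet_Ioo (fun t ht => ?_)
              have : t ∉ S := by rw [hS]; exact Set.notMem_empty t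
              have h2 : t⁻¹ • v ∉ C := fun hc => this ⟨ht, hc⟩
              simp [Set.indicator_of_notMem h2]
          _ = 0 := by simp
      rw [hzero, mul_zero]
      exact zero_le
    · have hbdd : BddBelow S := ⟨0, fun t ht => ht.1.1.le⟩
      set t₀ : ℝ := sInf S with ht₀def
      have ht₀0 : 0 ≤ t₀ := le_csInf hS (fun t ht => ht.1.1.le)
      obtain ⟨t₁, ht₁⟩ := hS
      have hSne : S.Nonempty := ⟨t₁, ht₁⟩
      have ht₀1 : t₀ ≤ 1 := le_trans (csInf_le hbdd ht₁) ht₁.1.2.le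
      -- step 1 : bound the integral
      have step1 : (∫⁻ t in Set.Ioo (0:ℝ) 1,
          ENNReal.ofReal (n * (1-t)^(n-1)) * C.indicator 1 (t⁻¹ • v))
          ≤ ∫⁻ t in Set.Ioc t₀ 1, ENNReal.ofReal (n * (1-t)^(n-1)) := by
        calc _ ≤ ∫⁻ t in Set.Ioo (0:ℝ) 1,
                (Set.Icc t₀ 1).indicator (fun t => ENNReal.ofReal (n * (1-t)^(n-1))) t := by
              refine setLIntegral_mono' measurableSet_Ioo (fun t htI => ?_)
              by_cases htS : t ∈ S
              · have h1 : t ∈ Set.Icc t₀ 1 := ⟨csInf_le hbdd htS, htS.1.2.le⟩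
                rw [Set.indicator_of_mem h1, Set.indicator_of_mem htS.2]
                simp
              · have htC : t⁻¹ • v ∉ C := fun hc => htS ⟨htI, hc⟩
                rw [Set.indicator_of_notMem htC, mul_zero]
                exact zero_le
          _ ≤ ∫⁻ t, (Set.Icc t₀ 1).indicator (fun t => ENNReal.ofReal (n * (1-t)^(n-1))) t := by
              exact setLIntegral_le_lintegral _ _
          _ = ∫⁻ t in Set.Icc t₀ 1, ENNReal.ofReal (n * (1-t)^(n-1)) := by
              rw [lintegral_indicator measurableSet_Icc]
          _ = ∫⁻ t in Set.Ioc t₀ 1, ENNReal.ofReal (n * (1-t)^(n-1)) := by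
              rw [Measure.restrict_congr_set Ioc_ae_eq_Icc]
      -- step 2 : evaluate the integral
      have step2 : ∫⁻ t in Set.Ioc t₀ 1, ENNReal.ofReal (n * (1-t)^(n-1))
          = ENNReal.ofReal ((1-t₀)^n) := by
        rw [← ofReal_integral_eq_lintegral_ofReal]
        · congr 1
          rw [← intervalIntegral.integral_of_le ht₀1]
          have comp := intervalIntegral.integral_comp_sub_left (a := t₀) (b := 1)
            (fun x : ℝ => (n : ℝ) * x^(n-1)) 1
          rw [comp]
          rw [intervalIntegral.integral_const_mul, integral_pow]
          have hnn : n - 1 + 1 = n := Nat.succ_pred_eq_of_pos hn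
          rw [hnn]
          rw [sub_self, zero_pow (by omega)]
          field_simp
          rw [show ((n - 1 : ℕ) : ℝ) + 1 = n by exact_mod_cast hnn]
          ring
        · exact (continuous_const.mul ((continuous_const.sub continuous_id).pow (n-1))).integrableOn_Ioc
        · filter_upwards [ae_restrict_mem measurableSet_Ioc] with t ht
          have h1 : 0 ≤ 1 - t := by linarith [ht.2]
          positivity
      -- step 3 : conclude with claim A through a sequence
      have step3 : ENNReal.ofReal ((1-t₀)^n) * volume K ≤ g v := by
        obtain ⟨u, hu_mono, hu_tend, hu_mem⟩ := exists_seq_tendsto_sInf ⟨t₁, ht₁⟩ hbdd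
        have hle : ∀ m : ℕ, ENNReal.ofReal ((1 - u m)^n) * volume K ≤ g v := by
          intro m
          have hum := hu_mem m
          exact claimA (u m) hum.1.1.le hum.1.2.le v (hmemS _ hum)
        have hcont : Filter.Tendsto (fun m => ENNReal.ofReal ((1 - u m)^n)) Filter.atTop
            (nhds (ENNReal.ofReal ((1 - t₀)^n))) := by
          apply (ENNReal.continuous_ofReal.tendsto _).comp
          have : Filter.Tendsto (fun m => (1 - u m)^n) Filter.atTop (nhds ((1 - t₀)^n)) := by
            exact ((continuous_const.sub continuous_id).pow n).continuousAt.tendsto.comp hu_tend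
          exact this
        exact le_of_tendsto (ENNReal.Tendsto.mul_const hcont (Or.inr hμKtop))
          (Filter.Eventually.of_forall hle)
      calc volume K * ∫⁻ t in Set.Ioo (0:ℝ) 1,
            ENNReal.ofReal (n * (1-t)^(n-1)) * C.indicator 1 (t⁻¹ • v)
          ≤ volume K * ENNReal.ofReal ((1-t₀)^n) := by
            exact mul_le_mul_right (step1.trans step2.le) _
        _ = ENNReal.ofReal ((1-t₀)^n) * volume K := mul_comm _ _
        _ ≤ g v := step3
  -- the beta constant
  set I : ℝ := (n.factorial * k.factorial : ℝ) / (n + k).factorial with hIdef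
  -- Claim C : integrating claim B
  have claimC : volume K * (ENNReal.ofReal I * volume C) ≤ ∫⁻ v : E, g v := by
    have c1 : Continuous fun t : ℝ => (n:ℝ)*(1-t)^(n-1) :=
      continuous_const.mul ((continuous_const.sub continuous_id).pow (n-1))
    have hsm : Measurable fun p : ℝ × E => p.1⁻¹ • p.2 :=
      (measurable_fst.inv).smul measurable_snd
    have hind : (fun p : ℝ × E => C.indicator 1 (p.1⁻¹ • p.2))
        = ((fun p : ℝ × E => p.1⁻¹ • p.2) ⁻¹' C).indicator (fun _ => (1:ℝ≥0∞)) := by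
      funext p
      by_cases h : p.1⁻¹ • p.2 ∈ C <;> simp [Set.indicator_apply, h]
    have hFm : Measurable (fun p : ℝ × E =>
        ENNReal.ofReal (n*(1-p.1)^(n-1)) * C.indicator 1 (p.1⁻¹ • p.2)) := by
      apply Measurable.mul
      · exact ENNReal.measurable_ofReal.comp (c1.measurable.comp measurable_fst)
      · rw [hind]
        exact measurable_const.indicator (hsm hCm)
    -- swap
    have hswap : ∫⁻ v : E, (∫⁻ t in Set.Ioo (0:ℝ) 1,
          ENNReal.ofReal (n * (1-t)^(n-1)) * C.indicator 1 (t⁻¹ • v))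
        = ∫⁻ t in Set.Ioo (0:ℝ) 1, ∫⁻ v : E,
          ENNReal.ofReal (n * (1-t)^(n-1)) * C.indicator 1 (t⁻¹ • v) := by
      exact lintegral_lintegral_swap ((hFm.comp measurable_swap).aemeasurable)
    -- inner computation
    have hinner : ∀ t ∈ Set.Ioo (0:ℝ) 1, (∫⁻ v : E,
          ENNReal.ofReal (n * (1-t)^(n-1)) * C.indicator 1 (t⁻¹ • v))
        = ENNReal.ofReal (n * (1-t)^(n-1)) * ENNReal.ofReal (t^k) * volume C := by
      intro t ht
      have hmv : Measurable fun v : E => C.indicator (1 : E → ℝ≥0∞) (t⁻¹ • v) := by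
        have : (fun v : E => C.indicator (1 : E → ℝ≥0∞) (t⁻¹ • v))
            = ((fun v : E => t⁻¹ • v) ⁻¹' C).indicator (fun _ => (1:ℝ≥0∞)) := by
          funext v
          by_cases h : t⁻¹ • v ∈ C <;> simp [Set.indicator_apply, h]
        rw [this]
        exact measurable_const.indicator (hCm.preimage (measurable_const_smul _))
      rw [lintegral_const_mul _ hmv, mul_assoc]
      congr 1
      have hpre : (fun v : E => t⁻¹ • v) ⁻¹' C = t • C := by
        ext u
        exact (Set.mem_smul_set_iff_inv_smul_mem₀ (ne_of_gt ht.1) C u).symm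
      have : ∫⁻ v : E, C.indicator (1 : E → ℝ≥0∞) (t⁻¹ • v) = volume (t • C) := by
        rw [show (fun v : E => C.indicator (1 : E → ℝ≥0∞) (t⁻¹ • v))
            = ((fun v : E => t⁻¹ • v) ⁻¹' C).indicator (fun _ => (1:ℝ≥0∞)) from by
          funext v; by_cases h : t⁻¹ • v ∈ C <;> simp [Set.indicator_apply, h]]
        rw [lintegral_indicator (hCm.preimage (measurable_const_smul _)), setLIntegral_one, hpre]
      rw [this]
      rw [Measure.addHaar_smul_of_nonneg volume ht.1.le C, hE]
    -- the scalar integral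
    have hscal : ∫⁻ t in Set.Ioo (0:ℝ) 1,
        ENNReal.ofReal (n * (1-t)^(n-1)) * ENNReal.ofReal (t^k) = ENNReal.ofReal I := by
      have h1 : ∀ t ∈ Set.Ioo (0:ℝ) 1,
          ENNReal.ofReal (n * (1-t)^(n-1)) * ENNReal.ofReal (t^k)
          = ENNReal.ofReal ((n * (1-t)^(n-1)) * t^k) := by
        intro t ht
        refine (ENNReal.ofReal_mul ?_).symm
        have : (0:ℝ) ≤ 1 - t := by linarith [ht.2]
        positivity
      rw [setLIntegral_congr_fun measurableSet_Ioo h1]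
      rw [← ofReal_integral_eq_lintegral_ofReal]
      · congr 1
        rw [← integral_Ioc_eq_integral_Ioo, ← intervalIntegral.integral_of_le zero_le_one]
        have hcg : (∫ t in (0:ℝ)..1, (n:ℝ) * (1-t)^(n-1) * t^k)
            = ∫ t in (0:ℝ)..1, (n:ℝ) * (t^k * (1-t)^(n-1)) :=
          intervalIntegral.integral_congr (fun t _ => by ring)
        rw [hcg, intervalIntegral.integral_const_mul, beta_nat k (n-1)]
        have he : k + (n-1) + 1 = n + k := by omega
        rw [he, hIdef]
        have hfacn : ((n:ℝ)) * (n-1).factorial = n.factorial := by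
          exact_mod_cast congrArg (Nat.cast : ℕ → ℝ) (Nat.mul_factorial_pred hn.ne')
        rw [← hfacn]
        ring
      · exact ((c1.mul (continuous_pow k)).integrableOn_Ioc).mono_set Set.Ioo_subset_Ioc_self
      · filter_upwards [ae_restrict_mem measurableSet_Ioo] with t ht
        have h2 : (0:ℝ) ≤ 1 - t := by linarith [ht.2]
        exact mul_nonneg (mul_nonneg (Nat.cast_nonneg n) (pow_nonneg h2 _))
          (pow_nonneg ht.1.le _)
    -- put everything together
    calc volume K * (ENNReal.ofReal I * volume C)
        = volume K * ∫⁻ v : E, (∫⁻ t in Set.Ioo (0:ℝ) 1,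
            ENNReal.ofReal (n * (1-t)^(n-1)) * C.indicator 1 (t⁻¹ • v)) := by
          rw [hswap, setLIntegral_congr_fun measurableSet_Ioo
            hinner]
          rw [lintegral_mul_const _ (by
            exact (ENNReal.measurable_ofReal.comp c1.measurable).mul
              (ENNReal.measurable_ofReal.comp (continuous_pow k).measurable))]
          rw [hscal]
      _ = ∫⁻ v : E, volume K * (∫⁻ t in Set.Ioo (0:ℝ) 1,
            ENNReal.ofReal (n * (1-t)^(n-1)) * C.indicator 1 (t⁻¹ • v)) := by
          rw [lintegral_const_mul' _ _ hμKtop]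
      _ ≤ ∫⁻ v : E, g v := lintegral_mono claimB
  -- Fubini upper bound
  have claimD : ∫⁻ v : E, g v ≤ M * volume K := by
    simp only [hgdef, hMdef]
    set M := ⨆ x : EuclideanSpace ℝ (Fin n), volume ((fun e : E => x + (e : EuclideanSpace ℝ (Fin n))) ⁻¹' K) with hM
    set D : Set (E × EuclideanSpace ℝ (Fin n)) :=
      {p | p.2 ∈ K ∧ p.2 - (p.1 : EuclideanSpace ℝ (Fin n)) ∈ K} with hD
    have hDm : MeasurableSet D := by
      apply MeasurableSet.inter
      · exact hKm.preimage measurable_snd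
      · exact hKm.preimage (measurable_snd.sub (continuous_subtype_val.measurable.comp measurable_fst))
    have hslice : ∀ v : E, volume {x : EuclideanSpace ℝ (Fin n) | x ∈ K ∧ x - (v : EuclideanSpace ℝ (Fin n)) ∈ K}
        = ∫⁻ x : EuclideanSpace ℝ (Fin n), D.indicator 1 (v, x) := by
      intro v
      have : (fun x : EuclideanSpace ℝ (Fin n) => D.indicator 1 (v, x))
          = ({x : EuclideanSpace ℝ (Fin n) | x ∈ K ∧ x - (v : EuclideanSpace ℝ (Fin n)) ∈ K}).indicator
              (fun _ => (1:ℝ≥0∞)) := by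
        funext x
        by_cases h : (v, x) ∈ D
        · rw [Set.indicator_of_mem h, Set.indicator_of_mem (by exact h)]
          rfl
        · rw [Set.indicator_of_notMem h, Set.indicator_of_notMem (by exact h)]
      have hm2 : MeasurableSet {x : EuclideanSpace ℝ (Fin n) | x ∈ K ∧ x - (v : EuclideanSpace ℝ (Fin n)) ∈ K} :=
        hKm.inter (hKm.preimage (measurable_id.sub measurable_const))
      rw [this, lintegral_indicator hm2, setLIntegral_one]
    have hswap : ∫⁻ v : E, (∫⁻ x : EuclideanSpace ℝ (Fin n), D.indicator 1 (v, x))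
        = ∫⁻ x : EuclideanSpace ℝ (Fin n), ∫⁻ v : E, D.indicator 1 (v, x) :=
      lintegral_lintegral_swap ((measurable_const.indicator hDm).aemeasurable)
    have hinner : ∀ x : EuclideanSpace ℝ (Fin n),
        (∫⁻ v : E, D.indicator 1 (v, x)) ≤ K.indicator (fun _ => M) x := by
      intro x
      by_cases hxK : x ∈ K
      · have hset : (fun v : E => D.indicator (1 : (E × EuclideanSpace ℝ (Fin n)) → ℝ≥0∞) (v, x))
            = ({v : E | x - (v : EuclideanSpace ℝ (Fin n)) ∈ K}).indicator (fun _ => (1:ℝ≥0∞)) := by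
          funext v
          simp only [Set.indicator_apply, hD, Set.mem_setOf_eq]
          by_cases h : x - (v : EuclideanSpace ℝ (Fin n)) ∈ K <;> simp [h, hxK]
        have hmS : MeasurableSet {v : E | x - (v : EuclideanSpace ℝ (Fin n)) ∈ K} :=
          hKm.preimage ((continuous_const.sub continuous_subtype_val).measurable)
        rw [hset, lintegral_indicator hmS, setLIntegral_one]
        have hneg : {v : E | x - (v : EuclideanSpace ℝ (Fin n)) ∈ K}
            = -((fun e : E => x + (e : EuclideanSpace ℝ (Fin n))) ⁻¹' K) := by
          ext v
          simp only [Set.mem_setOf_eq, Set.mem_neg, Set.mem_preimage, Submodule.coe_neg,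
            ← sub_eq_add_neg]
        rw [hneg, Measure.measure_neg, Set.indicator_of_mem hxK]
        exact le_iSup (fun x : EuclideanSpace ℝ (Fin n) =>
          volume ((fun e : E => x + (e : EuclideanSpace ℝ (Fin n))) ⁻¹' K)) x
      · have hset : (fun v : E => D.indicator (1 : (E × EuclideanSpace ℝ (Fin n)) → ℝ≥0∞) (v, x))
            = fun _ => (0:ℝ≥0∞) := by
          funext v
          exact Set.indicator_of_notMem (fun hc => hxK hc.1) _
        rw [hset, lintegral_const, zero_mul, Set.indicator_of_notMem hxK]
    calc ∫⁻ v : E, volume {x : EuclideanSpace ℝ (Fin n) | x ∈ K ∧ x - (v : EuclideanSpace ℝ (Fin n)) ∈ K}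
        = ∫⁻ x : EuclideanSpace ℝ (Fin n), ∫⁻ v : E, D.indicator 1 (v, x) := by
          rw [← hswap]
          exact lintegral_congr hslice
      _ ≤ ∫⁻ x : EuclideanSpace ℝ (Fin n), K.indicator (fun _ => M) x := lintegral_mono hinner
      _ = M * volume K := by
          rw [lintegral_indicator hKm, setLIntegral_const]
  -- conclusion
  have hIC : ENNReal.ofReal I * volume C ≤ M := by
    have h := le_trans claimC claimD
    rw [mul_comm M (volume K)] at h
    exact (ENNReal.mul_le_mul_iff_right hμK0 hμKtop).1 h
  have hchoose : ((n + k).choose k : ℝ≥0∞) * ENNReal.ofReal I = 1 := by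
    rw [← ENNReal.ofReal_natCast, ← ENNReal.ofReal_mul (by positivity)]
    rw [show ((n + k).choose k : ℝ) * I = 1 from ?_, ENNReal.ofReal_one]
    have hfac : ((n+k).factorial : ℝ) ≠ 0 := Nat.cast_ne_zero.2 (Nat.factorial_ne_zero _)
    have hnat : (n + k).choose k * k.factorial * n.factorial = (n+k).factorial := by
      have := Nat.choose_mul_factorial_mul_factorial (Nat.le_add_left k n)
      simpa [Nat.add_sub_cancel] using this
    rw [hIdef]
    field_simp
    push_cast [← hnat]
    ring
  calc volume C = (((n + k).choose k : ℝ≥0∞) * ENNReal.ofReal I) * volume C := by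
        rw [hchoose, one_mul]
    _ = ((n + k).choose k : ℝ≥0∞) * (ENNReal.ofReal I * volume C) := by ring
    _ ≤ ((n + k).choose k : ℝ≥0∞) * M := mul_le_mul_right hIC _
end
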